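/- Let R be a commutative ring and n > 1. The set MT_n of vector-polynomials of the form (f_1, f_2 + x_2 g_2, ..., f_n + x_n g_n), where f_1 ∈ R[x_1] is a permutation polynomial on R, f_i ∈ R[x_1,...,x_{i-1}], and g_i ∈ R[x_1,...,x_{i-1}] is unit-valued on R, is closed under composition of vector-polynomials and contains the identity (x_1,...,x_n); hence MT_n is a monoid under composition. -/

import Mathlib

open MvPolynomial

/-- The set `MT_n` of triangular vector-permutation polynomials: component `0` is a
one-variable permutation polynomial, and component `i ≠ 0` has the form
`f_i + x_i·g_i` with `f_i, g_i` polynomials in the variables `x_0,…,x_{i-1}` and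
`g_i` unit-valued on `R`. -/
def MT (R : Type*) [CommRing R] (n : ℕ) : Set (Fin n → MvPolynomial (Fin n) R) :=
  {p | ∀ i : Fin n,
    (i.val = 0 → ∃ h : Polynomial R, Function.Bijective (fun a : R => h.eval a) ∧
      p i = Polynomial.aeval (X i : MvPolynomial (Fin n) R) h) ∧
    (i.val ≠ 0 → ∃ f g : MvPolynomial (Fin i.val) R,
      (∀ v : Fin i.val → R, IsUnit (eval v g)) ∧
      p i = rename (Fin.castLE i.isLt.le) f + X i * rename (Fin.castLE i.isLt.le) g)}

/-- Composition of vector-polynomials: `(p ∘ q) i = p_i(q_1,…,q_n)`. -/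
noncomputable def vcomp {R : Type*} [CommRing R] {n : ℕ} (p q : Fin n → MvPolynomial (Fin n) R) :
    Fin n → MvPolynomial (Fin n) R :=
  fun i => bind₁ q (p i)

private lemma eval_bind₁' {R : Type*} [CommRing R] {σ τ : Type*} (v : τ → R)
    (g : σ → MvPolynomial τ R) (φ : MvPolynomial σ R) :
    eval v (bind₁ g φ) = eval (fun j => eval v (g j)) φ := by
  simpa using aeval_bind₁ (S := R) v g φ

/-- `MT_n` contains the identity `(x_1,…,x_n)` and is closed under
composition of vector-polynomials, hence is a monoid under composition. -/
theorem MT_isMonoid (R : Type*) [CommRing R] (n : ℕ) (hn : 1 < n) :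
    ((fun i : Fin n => (X i : MvPolynomial (Fin n) R)) ∈ MT R n) ∧
    (∀ p q : Fin n → MvPolynomial (Fin n) R,
      p ∈ MT R n → q ∈ MT R n → vcomp p q ∈ MT R n) := by
  constructor
  · intro i
    refine ⟨fun hi => ⟨Polynomial.X, by simp only [Polynomial.eval_X]; exact Function.bijective_id, by simp⟩,
      fun hi => ⟨0, 1, fun v => by simp, by simp⟩⟩
  · intro p q hp hq i
    constructor
    · intro hi
      obtain ⟨hp1, hbp, hpe⟩ := (hp i).1 hi
      obtain ⟨hq1, hbq, hqe⟩ := (hq i).1 hi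
      refine ⟨hp1.comp hq1, ?_, ?_⟩
      · have : (fun a : R => (hp1.comp hq1).eval a)
            = (fun a => hp1.eval a) ∘ (fun a => hq1.eval a) := by
          funext a; simp [Polynomial.eval_comp]
        rw [this]; exact hbp.comp hbq
      · show bind₁ q (p i) = _
        rw [hpe, Polynomial.aeval_comp, ← Polynomial.aeval_algHom_apply, bind₁_X_right, hqe]
    · intro hi
      obtain ⟨F, G, hG, hpe⟩ := (hp i).2 hi
      obtain ⟨fq, gq, hgq, hqe⟩ := (hq i).2 hi
      have hq' : ∀ j : Fin i.val, ∃ q'j : MvPolynomial (Fin i.val) R,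
          rename (Fin.castLE i.isLt.le) q'j = q (Fin.castLE i.isLt.le j) := by
        intro j
        by_cases hj : j.val = 0
        · obtain ⟨h1, _, he⟩ := (hq (Fin.castLE i.isLt.le j)).1 hj
          refine ⟨Polynomial.aeval (X j) h1, ?_⟩
          rw [he, ← Polynomial.aeval_algHom_apply, rename_X]
        · obtain ⟨f, g, _, he⟩ := (hq (Fin.castLE i.isLt.le j)).2 hj
          refine ⟨rename (Fin.castLE j.isLt.le) f + X j * rename (Fin.castLE j.isLt.le) g, ?_⟩
          rw [he]
          simp only [map_add, map_mul, rename_X, rename_rename]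
          congr 2 <;> · funext x; simp [Fin.castLE]
      choose q' hq's using hq'
      refine ⟨bind₁ q' F + fq * bind₁ q' G, gq * bind₁ q' G, ?_, ?_⟩
      · intro v
        rw [map_mul]
        exact (hgq v).mul (by rw [eval_bind₁']; exact hG _)
      · show bind₁ q (p i) = _
        have h1 : ∀ φ : MvPolynomial (Fin i.val) R,
            bind₁ q (rename (Fin.castLE i.isLt.le) φ)
              = rename (Fin.castLE i.isLt.le) (bind₁ q' φ) := by
          intro φ
          rw [bind₁_rename, rename_bind₁]
          have hfun : (q ∘ Fin.castLE i.isLt.le)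
              = fun j => rename (Fin.castLE i.isLt.le) (q' j) :=
            funext fun j => (hq's j).symm
          rw [hfun]
        rw [hpe, map_add, map_mul, bind₁_X_right, hqe, h1, h1]
        simp only [map_add, map_mul]
        ring
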